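/- Let n ≥ 0 and O_{n+1} = { A ∈ GL_{n+1}(ℝ) : Aᵀ A = I }, with normalizer N(O_{n+1}) in GL_{n+1}(ℝ). For every B ∈ N(O_{n+1}) there is a unique positive real number p(B) with Bᵀ B = p(B)·I, and the resulting map p : N(O_{n+1}) → ℝ₊ˣ is a surjective group homomorphism onto the multiplicative group of positive real numbers, with kernel exactly O_{n+1}. -/

import Mathlib

open Matrix

/-- The orthogonal group `O_{n+1} = { A ∈ GL_{n+1}(ℝ) : Aᵀ A = I }` as a
subgroup of `GL_{n+1}(ℝ)`. -/
def OGroup (n : ℕ) : Subgroup (GL (Fin (n + 1)) ℝ) where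
  carrier := {A | (A : Matrix (Fin (n + 1)) (Fin (n + 1)) ℝ)ᵀ *
    (A : Matrix (Fin (n + 1)) (Fin (n + 1)) ℝ) = 1}
  one_mem' := by simp
  mul_mem' := by
    intro a b ha hb
    simp only [Set.mem_setOf_eq] at *
    set M := (a : Matrix (Fin (n + 1)) (Fin (n + 1)) ℝ)
    set N := (b : Matrix (Fin (n + 1)) (Fin (n + 1)) ℝ)
    have : ((a * b : GL (Fin (n + 1)) ℝ) : Matrix (Fin (n + 1)) (Fin (n + 1)) ℝ)
        = M * N := rfl
    rw [this, Matrix.transpose_mul]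
    calc Nᵀ * Mᵀ * (M * N) = Nᵀ * (Mᵀ * M) * N := by noncomm_ring
      _ = Nᵀ * N := by rw [ha, mul_one]
      _ = 1 := hb
  inv_mem' := by
    intro a ha
    simp only [Set.mem_setOf_eq] at *
    set M := (a : Matrix (Fin (n + 1)) (Fin (n + 1)) ℝ)
    set N := ((a⁻¹ : GL (Fin (n + 1)) ℝ) : Matrix (Fin (n + 1)) (Fin (n + 1)) ℝ)
    have hMN : M * N = 1 := a.mul_inv
    have hNM : N * M = 1 := a.inv_mul
    -- from `Mᵀ M = 1` and invertibility, `N = Mᵀ`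
    have hN : N = Mᵀ := by
      calc N = (Mᵀ * M) * N := by rw [ha, one_mul]
        _ = Mᵀ * (M * N) := by rw [mul_assoc]
        _ = Mᵀ := by rw [hMN, mul_one]
    rw [hN, Matrix.transpose_transpose]
    calc M * Mᵀ = M * N := by rw [hN]
      _ = 1 := hMN

section Aux

variable {n : ℕ}

private abbrev Mat (n : ℕ) := Matrix (Fin (n + 1)) (Fin (n + 1)) ℝ

/-- A matrix commuting (in the twisted sense `Aᵀ S A = S`) with all orthogonal
matrices is scalar. -/
private lemma scalar_of_conj (S : Mat n)
    (h : ∀ A : Mat n, Aᵀ * A = 1 → A * Aᵀ = 1 → Aᵀ * S * A = S) :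
    S = S 0 0 • (1 : Mat n) := by
  -- off-diagonal entries vanish, via sign matrices
  have offdiag : ∀ i j : Fin (n + 1), i ≠ j → S i j = 0 := by
    intro i j hij
    set d : Fin (n + 1) → ℝ := fun l => if l = i then -1 else 1 with hd
    have hdd : ∀ l, d l * d l = 1 := by intro l; simp only [hd]; split_ifs <;> norm_num
    have hmul : Matrix.diagonal d * Matrix.diagonal d = 1 := by
      rw [Matrix.diagonal_mul_diagonal]
      ext a b
      by_cases hab : a = b
      · subst hab; simp [hdd]
      · simp [Matrix.diagonal_apply_ne _ hab, Matrix.one_apply_ne hab]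
    have hDt : (Matrix.diagonal d)ᵀ = Matrix.diagonal d := Matrix.diagonal_transpose d
    have key := h (Matrix.diagonal d) (by rw [hDt]; exact hmul) (by rw [hDt]; exact hmul)
    rw [hDt] at key
    have := congrFun (congrFun key i) j
    rw [Matrix.mul_diagonal, Matrix.diagonal_mul] at this
    have hdi : d i = -1 := by simp [hd]
    have hdj : d j = 1 := by simp [hd, (Ne.symm hij)]
    rw [hdi, hdj] at this
    linarith
  -- diagonal entries are all equal, via transposition matrices
  have diag : ∀ i : Fin (n + 1), S i i = S 0 0 := by
    intro i
    set σ := Equiv.swap (0 : Fin (n + 1)) i with hσ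
    set P : Mat n := fun a b => if σ a = b then 1 else 0 with hP
    have hPt : Pᵀ = P := by
      ext a b
      simp only [Matrix.transpose_apply, hP]
      have hinv : ∀ x, σ (σ x) = x := fun x => Equiv.swap_apply_self _ _ x
      have : σ b = a ↔ σ a = b := by
        constructor
        · rintro rfl; exact hinv b
        · rintro rfl; exact hinv a
      show (if σ b = a then (1:ℝ) else 0) = if σ a = b then 1 else 0; simp [this]
    have hPP : P * P = 1 := by
      ext a b
      rw [Matrix.mul_apply]
      simp only [hP]
      rw [Finset.sum_eq_single (σ a)]
      · simp only [if_pos rfl, one_mul]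
        have : σ (σ a) = a := Equiv.swap_apply_self _ _ _
        rw [this]
        by_cases hab : a = b
        · subst hab; simp
        · simp [hab, Matrix.one_apply_ne hab]
      · intro c _ hc
        rw [if_neg (by intro h'; exact hc h'.symm), zero_mul]
      · intro h'; exact absurd (Finset.mem_univ _) h'
    have key := h P (by rw [hPt]; exact hPP) (by rw [hPt]; exact hPP)
    rw [hPt] at key
    have hent := congrFun (congrFun key 0) 0
    -- compute (P * S * P) 0 0 = S (σ 0) (σ 0) = S i i
    have hPS : ∀ a b, (P * S * P) a b = S (σ a) (σ b) := by
      intro a b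
      rw [Matrix.mul_apply]
      have hrow : ∀ c, (P * S) a c = S (σ a) c := by
        intro c
        rw [Matrix.mul_apply]
        rw [Finset.sum_eq_single (σ a)]
        · simp [hP]
        · intro e _ he; simp only [hP]; rw [if_neg (fun h' => he h'.symm), zero_mul]
        · intro h'; exact absurd (Finset.mem_univ _) h'
      calc ∑ c, (P * S) a c * P c b = ∑ c, S (σ a) c * P c b := by
            refine Finset.sum_congr rfl fun c _ => by rw [hrow]
        _ = S (σ a) (σ b) := by
            rw [Finset.sum_eq_single (σ b)]
            · have : σ (σ b) = b := Equiv.swap_apply_self _ _ _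
              simp [hP, this]
            · intro c _ hc
              simp only [hP]
              have : σ c ≠ b := by
                intro h'
                apply hc
                rw [← h']; exact (Equiv.swap_apply_self _ _ _).symm
              rw [if_neg this, mul_zero]
            · intro h'; exact absurd (Finset.mem_univ _) h'
    rw [hPS] at hent
    have h0 : σ 0 = i := Equiv.swap_apply_left _ _
    rw [h0] at hent
    exact hent
  ext a b
  by_cases hab : a = b
  · subst hab
    simp [diag a, Matrix.one_apply_eq]
  · simp [offdiag a b hab, Matrix.one_apply_ne hab]

end Aux

/-- Exactness part of the paper's Lemma 6.6 (lem:N(O)): each `B ∈ N(O_{n+1})`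
satisfies `Bᵀ B = p(B)·I` for a unique positive real `p(B)`, and the resulting
map `p : N(O_{n+1}) → ℝ₊ˣ` into the multiplicative group of positive reals is
a surjective group homomorphism with kernel exactly `O_{n+1}`. -/
theorem orthogonal_normalizer_exact_sequence (n : ℕ) :
    (∀ B : (Subgroup.normalizer (OGroup n : Set (GL (Fin (n + 1)) ℝ))),
      ∃! r : {x : ℝ // 0 < x},
        ((B : GL (Fin (n + 1)) ℝ) : Matrix (Fin (n + 1)) (Fin (n + 1)) ℝ)ᵀ *
          ((B : GL (Fin (n + 1)) ℝ) : Matrix (Fin (n + 1)) (Fin (n + 1)) ℝ)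
            = (r : ℝ) • (1 : Matrix (Fin (n + 1)) (Fin (n + 1)) ℝ)) ∧
    ∃ p : (Subgroup.normalizer (OGroup n : Set (GL (Fin (n + 1)) ℝ))) →* {x : ℝ // 0 < x},
      (∀ B : (Subgroup.normalizer (OGroup n : Set (GL (Fin (n + 1)) ℝ))),
        ((B : GL (Fin (n + 1)) ℝ) : Matrix (Fin (n + 1)) (Fin (n + 1)) ℝ)ᵀ *
          ((B : GL (Fin (n + 1)) ℝ) : Matrix (Fin (n + 1)) (Fin (n + 1)) ℝ)
            = (p B : ℝ) • (1 : Matrix (Fin (n + 1)) (Fin (n + 1)) ℝ)) ∧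
      Function.Surjective p ∧
      ∀ B : (Subgroup.normalizer (OGroup n : Set (GL (Fin (n + 1)) ℝ))), p B = 1 ↔ (B : GL (Fin (n + 1)) ℝ) ∈ OGroup n := by
  classical
  -- notation
  set Mmat : (Subgroup.normalizer (OGroup n : Set (GL (Fin (n + 1)) ℝ))) → Matrix (Fin (n + 1)) (Fin (n + 1)) ℝ :=
    fun B => ((B : GL (Fin (n + 1)) ℝ) : Matrix (Fin (n + 1)) (Fin (n + 1)) ℝ) with hMmat
  -- the fundamental scalar property
  have key : ∀ B : (Subgroup.normalizer (OGroup n : Set (GL (Fin (n + 1)) ℝ))),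
      (Mmat B)ᵀ * Mmat B = ((Mmat B)ᵀ * Mmat B) 0 0 • 1 ∧
      0 < ((Mmat B)ᵀ * Mmat B) 0 0 := by
    intro B
    set M := Mmat B with hM
    set Bg : GL (Fin (n + 1)) ℝ := (B : GL (Fin (n + 1)) ℝ) with hBg
    set N : Matrix (Fin (n + 1)) (Fin (n + 1)) ℝ :=
      ((Bg⁻¹ : GL (Fin (n + 1)) ℝ) : Matrix (Fin (n + 1)) (Fin (n + 1)) ℝ) with hNdef
    have hMN : M * N = 1 := Bg.mul_inv
    have hNM : N * M = 1 := Bg.inv_mul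
    have hconj : ∀ A : Matrix (Fin (n + 1)) (Fin (n + 1)) ℝ,
        Aᵀ * A = 1 → A * Aᵀ = 1 → Aᵀ * (Mᵀ * M) * A = Mᵀ * M := by
      intro A h1 h2
      set Ag : GL (Fin (n + 1)) ℝ := ⟨A, Aᵀ, h2, h1⟩ with hAg
      have hAmem : Ag ∈ OGroup n := h1
      have hnorm := (Subgroup.mem_normalizer_iff.mp B.2 Ag).mp hAmem
      -- hnorm : Bg * Ag * Bg⁻¹ ∈ OGroup n
      have hmat : ((Bg * Ag * Bg⁻¹ : GL (Fin (n + 1)) ℝ) :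
          Matrix (Fin (n + 1)) (Fin (n + 1)) ℝ) = M * A * N := rfl
      have hOeq : (M * A * N)ᵀ * (M * A * N) = 1 := by
        have := hnorm
        simp only [OGroup, Subgroup.mem_mk, Set.mem_setOf_eq] at this
        change (M * A * N)ᵀ * (M * A * N) = 1 at this
        exact this
      -- unfold: Nᵀ Aᵀ Mᵀ M A N = 1 ⇒ Aᵀ Mᵀ M A = Mᵀ M
      have expand : Nᵀ * (Aᵀ * (Mᵀ * M) * A) * N = 1 := by
        calc Nᵀ * (Aᵀ * (Mᵀ * M) * A) * N = (M * A * N)ᵀ * (M * A * N) := by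
              simp only [Matrix.transpose_mul]; noncomm_ring
          _ = 1 := hOeq
      calc Aᵀ * (Mᵀ * M) * A
          = (Mᵀ * Nᵀ) * (Aᵀ * (Mᵀ * M) * A) * (N * M) := by
            have h3 : Mᵀ * Nᵀ = 1 := by rw [← Matrix.transpose_mul, hNM, Matrix.transpose_one]
            rw [h3, hNM, one_mul, mul_one]
        _ = Mᵀ * (Nᵀ * (Aᵀ * (Mᵀ * M) * A) * N) * M := by noncomm_ring
        _ = Mᵀ * M := by rw [expand, mul_one]
    have hscalar : Mᵀ * M = (Mᵀ * M) 0 0 • 1 := scalar_of_conj (Mᵀ * M) hconj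
    refine ⟨hscalar, ?_⟩
    set c := (Mᵀ * M) 0 0 with hc
    -- c ≥ 0: it's a sum of squares
    have hge : 0 ≤ c := by
      rw [hc, Matrix.mul_apply]
      apply Finset.sum_nonneg
      intro k _
      rw [Matrix.transpose_apply]
      exact mul_self_nonneg _
    -- c ≠ 0: else Mᵀ M = 0 but it has an inverse
    have hne : c ≠ 0 := by
      intro h0
      have hinv : (Mᵀ * M) * (N * Nᵀ) = 1 := by
        calc (Mᵀ * M) * (N * Nᵀ) = Mᵀ * (M * N) * Nᵀ := by noncomm_ring
          _ = Mᵀ * Nᵀ := by rw [hMN, mul_one]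
          _ = (N * M)ᵀ := by rw [Matrix.transpose_mul]
          _ = 1 := by rw [hNM, Matrix.transpose_one]
      rw [hscalar, h0, zero_smul, zero_mul] at hinv
      have := congrFun (congrFun hinv 0) 0
      simp [Matrix.one_apply_eq] at this
    exact lt_of_le_of_ne hge (Ne.symm hne)
  -- the candidate map
  set f : (Subgroup.normalizer (OGroup n : Set (GL (Fin (n + 1)) ℝ))) → {x : ℝ // 0 < x} :=
    fun B => ⟨((Mmat B)ᵀ * Mmat B) 0 0, (key B).2⟩ with hf
  have hfspec : ∀ B, (Mmat B)ᵀ * Mmat B = ((f B : ℝ)) • 1 := fun B => (key B).1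
  -- extract scalar from an equality of scalar matrices
  have scal_inj : ∀ a b : ℝ, a • (1 : Matrix (Fin (n + 1)) (Fin (n + 1)) ℝ) = b • 1 → a = b := by
    intro a b hab
    have := congrFun (congrFun hab 0) 0
    simpa [Matrix.one_apply_eq] using this
  constructor
  · -- unique existence
    intro B
    refine ⟨f B, hfspec B, ?_⟩
    intro r hr
    apply Subtype.ext
    exact scal_inj _ _ (hr ▸ hfspec B)
  · -- the monoid hom
    have hmul : ∀ B C : (Subgroup.normalizer (OGroup n : Set (GL (Fin (n + 1)) ℝ))), f (B * C) = f B * f C := by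
      intro B C
      have hBC : Mmat (B * C) = Mmat B * Mmat C := rfl
      have : (Mmat (B * C))ᵀ * Mmat (B * C) = ((f B : ℝ) * (f C : ℝ)) • 1 := by
        rw [hBC, Matrix.transpose_mul]
        calc (Mmat C)ᵀ * (Mmat B)ᵀ * (Mmat B * Mmat C)
            = (Mmat C)ᵀ * ((Mmat B)ᵀ * Mmat B) * Mmat C := by noncomm_ring
          _ = (Mmat C)ᵀ * ((f B : ℝ) • 1) * Mmat C := by rw [hfspec B]
          _ = (f B : ℝ) • ((Mmat C)ᵀ * Mmat C) := by
              rw [Matrix.mul_smul, mul_one, Matrix.smul_mul]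
          _ = (f B : ℝ) • ((f C : ℝ) • 1) := by rw [hfspec C]
          _ = ((f B : ℝ) * (f C : ℝ)) • 1 := by rw [smul_smul]
      apply Subtype.ext
      exact scal_inj _ _ ((hfspec (B * C)).symm.trans this)
    set p : (Subgroup.normalizer (OGroup n : Set (GL (Fin (n + 1)) ℝ))) →* {x : ℝ // 0 < x} := MonoidHom.mk' f hmul with hp
    refine ⟨p, hfspec, ?_, ?_⟩
    · -- surjectivity
      intro r
      set s := Real.sqrt r with hs
      have hspos : 0 < s := Real.sqrt_pos.mpr r.2
      have hsne : s ≠ 0 := ne_of_gt hspos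
      set Bg : GL (Fin (n + 1)) ℝ :=
        ⟨s • 1, s⁻¹ • 1, by rw [Matrix.smul_mul, Matrix.mul_smul, smul_smul, mul_one,
            mul_inv_cancel₀ hsne, one_smul], by rw [Matrix.smul_mul, Matrix.mul_smul, smul_smul,
            mul_one, inv_mul_cancel₀ hsne, one_smul]⟩ with hBg
      have hcen : ∀ g : GL (Fin (n + 1)) ℝ, Bg * g = g * Bg := by
        intro g
        apply Units.ext
        show (s • (1 : Matrix (Fin (n + 1)) (Fin (n + 1)) ℝ)) * g =
          (g : Matrix (Fin (n + 1)) (Fin (n + 1)) ℝ) * (s • 1)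
        rw [Matrix.smul_mul, Matrix.mul_smul, one_mul, mul_one]
      have hmem : Bg ∈ (Subgroup.normalizer (OGroup n : Set (GL (Fin (n + 1)) ℝ))) := by
        rw [Subgroup.mem_normalizer_iff]
        intro g
        have : Bg * g * Bg⁻¹ = g := by
          rw [hcen g, mul_assoc, mul_inv_cancel, mul_one]
        rw [this]
      refine ⟨⟨Bg, hmem⟩, ?_⟩
      apply Subtype.ext
      show ((Mmat ⟨Bg, hmem⟩)ᵀ * Mmat ⟨Bg, hmem⟩) 0 0 = (r : ℝ)
      have hmm : Mmat ⟨Bg, hmem⟩ = s • 1 := rfl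
      have : (Mmat ⟨Bg, hmem⟩)ᵀ * Mmat ⟨Bg, hmem⟩ = (r : ℝ) • 1 := by
        rw [hmm, Matrix.transpose_smul, Matrix.transpose_one, Matrix.smul_mul, Matrix.mul_smul,
          mul_one, smul_smul]
        rw [hs, Real.mul_self_sqrt (le_of_lt r.2)]
      rw [this]
      simp [Matrix.one_apply_eq]
    · -- kernel
      intro B
      constructor
      · intro h1
        show (Mmat B)ᵀ * Mmat B = 1
        have h2 : (f B : ℝ) = 1 := congrArg Subtype.val h1
        have := hfspec B
        rw [h2] at this
        simpa using this
      · intro hmem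
        have hm : (Mmat B)ᵀ * Mmat B = 1 := hmem
        apply Subtype.ext
        show ((Mmat B)ᵀ * Mmat B) 0 0 = 1
        rw [hm]
        simp [Matrix.one_apply_eq]
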